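/- Let α, σ : [0,1] → (0, ∞) be differentiable and fix ê ∈ ℝ^n. Let z : [0,1] → ℝ^n be differentiable and solve the linearized probability-flow ODE z'(t) = (σ'(t)/σ(t))·z(t) + (α'(t) − α(t)·σ'(t)/σ(t))·ê on [0,1]. Then the implied noise prediction (z(t) − α(t)·ê)/σ(t) is constant in t; in particular, for any s, t ∈ [0,1], z(s) = α(s)·ê + σ(s)·(z(t) − α(t)·ê)/σ(t). Hence the DDIM update z_s = α_s·ê_θ + σ_s·ε̂_θ is the exact solution of the probability-flow ODE linearized at the fixed clean-data prediction ê, for any step size. -/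

import Mathlib

open Set

/-- **DDIM exactly solves the PFODE linearized at a fixed clean-data prediction.**
Let `α, σ : [0,1] → (0,∞)` be differentiable and fix `ê ∈ ℝⁿ`.  If `z : [0,1] → ℝⁿ`
solves `z'(t) = (σ'(t)/σ(t)) z(t) + (α'(t) - α(t) σ'(t)/σ(t)) ê`, then the implied
noise prediction `(z(t) - α(t) ê)/σ(t)` is constant in `t`; in particular, for any
`s, t ∈ [0,1]`, `z(s) = α(s) ê + σ(s) (z(t) - α(t) ê)/σ(t)`, i.e., the DDIM update
`z_s = α_s ê + σ_s ε̂` is the exact solution for any step size. -/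
theorem ddim_exact_for_linearized_pfode
    {n : ℕ} (α σ α' σ' : ℝ → ℝ)
    (hα_pos : ∀ t ∈ Icc (0:ℝ) 1, 0 < α t)
    (hσ_pos : ∀ t ∈ Icc (0:ℝ) 1, 0 < σ t)
    (hα : ∀ t ∈ Icc (0:ℝ) 1, HasDerivWithinAt α (α' t) (Icc (0:ℝ) 1) t)
    (hσ : ∀ t ∈ Icc (0:ℝ) 1, HasDerivWithinAt σ (σ' t) (Icc (0:ℝ) 1) t)
    (ehat : Fin n → ℝ) (z : ℝ → (Fin n → ℝ))
    (hz : ∀ t ∈ Icc (0:ℝ) 1,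
      HasDerivWithinAt z
        ((σ' t / σ t) • z t + (α' t - α t * σ' t / σ t) • ehat)
        (Icc (0:ℝ) 1) t) :
    ∀ s ∈ Icc (0:ℝ) 1, ∀ t ∈ Icc (0:ℝ) 1,
      (σ s)⁻¹ • (z s - α s • ehat) = (σ t)⁻¹ • (z t - α t • ehat) ∧
      z s = α s • ehat + (σ s * (σ t)⁻¹) • (z t - α t • ehat) := by
  intro s hs t ht
  set g : ℝ → (Fin n → ℝ) := fun u => (σ u)⁻¹ • (z u - α u • ehat) with hg
  have hgderiv : ∀ u ∈ Icc (0:ℝ) 1,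
      HasDerivWithinAt g (0 : Fin n → ℝ) (Icc (0:ℝ) 1) u := by
    intro u hu
    have hσu : σ u ≠ 0 := (hσ_pos u hu).ne'
    have hinv : HasDerivWithinAt (fun v => (σ v)⁻¹) (-σ' u / (σ u)^2)
        (Icc (0:ℝ) 1) u := (hσ u hu).inv hσu
    have hsub : HasDerivWithinAt (fun v => z v - α v • ehat)
        (((σ' u / σ u) • z u + (α' u - α u * σ' u / σ u) • ehat) - α' u • ehat)
        (Icc (0:ℝ) 1) u := (hz u hu).sub ((hα u hu).smul_const ehat)
    have := hinv.smul hsub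
    refine this.congr_deriv ?_
    have h2 : (σ u)^2 ≠ 0 := pow_ne_zero _ hσu
    ext i
    simp only [Pi.add_apply, Pi.smul_apply, Pi.sub_apply, Pi.zero_apply, smul_eq_mul]
    field_simp
    ring
  have hmvt := (convex_Icc (0:ℝ) 1).norm_image_sub_le_of_norm_hasDerivWithin_le
    hgderiv (C := 0) (fun u hu => by simp) ht hs
  have hconst : g s = g t := by
    have : ‖g s - g t‖ ≤ 0 := by simpa using hmvt
    have := le_antisymm this (norm_nonneg _)
    rwa [norm_eq_zero, sub_eq_zero] at this
  refine ⟨hconst, ?_⟩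
  have hσs : σ s ≠ 0 := (hσ_pos s hs).ne'
  have : (σ s) • g s = (σ s) • g t := by rw [hconst]
  rw [hg] at this
  simp only [smul_smul, mul_inv_cancel₀ hσs, one_smul] at this
  rw [← this]
  abel
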